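/- Let α, β, γ, δ > 0 with max{α,β} ≤ min{γ,δ}, and let n ≥ 1. Suppose f, g, h, k : ℤⁿ → [0,∞) satisfy f(x)^α · g(y)^β ≤ h(x∧y)^γ · k(x∨y)^δ for all x, y ∈ ℤⁿ, where x∧y = (min(x₁,y₁),…,min(xₙ,yₙ)) and x∨y = (max(x₁,y₁),…,max(xₙ,yₙ)). Then (∑_{x∈ℤⁿ} f(x))^α · (∑_{x∈ℤⁿ} g(x))^β ≤ (∑_{x∈ℤⁿ} h(x))^γ · (∑_{x∈ℤⁿ} k(x))^δ, where the sums are taken in the extended nonnegative reals [0,∞]. -/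

import Mathlib

open scoped BigOperators ENNReal NNReal FinsetFamily

open Finset in
/-- Subadditivity of `x ↦ x ^ q` for `0 < q ≤ 1` over finite sums in `ℝ≥0`. -/
lemma wff_sum_rpow_le {ι : Type*} (s : Finset ι) (f : ι → ℝ≥0) {q : ℝ}
    (hq0 : 0 < q) (hq1 : q ≤ 1) :
    (∑ x ∈ s, f x) ^ q ≤ ∑ x ∈ s, f x ^ q := by
  classical
  induction s using Finset.cons_induction with
  | empty => simp [NNReal.zero_rpow hq0.ne']
  | cons a s ha ih =>
      rw [Finset.sum_cons, Finset.sum_cons]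
      calc (f a + ∑ x ∈ s, f x) ^ q ≤ f a ^ q + (∑ x ∈ s, f x) ^ q :=
            NNReal.rpow_add_le_add_rpow _ _ hq0.le hq1
        _ ≤ f a ^ q + ∑ x ∈ s, f x ^ q := by gcongr
        -- `gcongr` handles adding `ih`

/-- If `x ≤ c` and `1 ≤ q` then a finite sum of `x ^ q` is at most `c ^ q`,
provided the plain sum is at most `c`. -/
lemma wff_sum_rpow_ge_one_le {ι : Type*} (s : Finset ι) (f : ι → ℝ≥0) (c : ℝ≥0) {q : ℝ}
    (hq : 1 ≤ q) (hpt : ∀ x, f x ≤ c) (hsum : ∑ x ∈ s, f x ≤ c) :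
    ∑ x ∈ s, f x ^ q ≤ c ^ q := by
  have hq0 : q ≠ 0 := by positivity
  have h1 : (1 : ℝ) + (q - 1) = q := by ring
  have step : ∀ x, f x ^ q ≤ f x * c ^ (q - 1) := by
    intro x
    calc f x ^ q = f x ^ ((1 : ℝ) + (q - 1)) := by rw [h1]
      _ = f x ^ (1 : ℝ) * f x ^ (q - 1) := NNReal.rpow_add' (by rw [h1]; exact hq0) _
      _ ≤ f x ^ (1 : ℝ) * c ^ (q - 1) :=
          mul_le_mul' le_rfl (NNReal.rpow_le_rpow (hpt x) (by linarith))
      _ = f x * c ^ (q - 1) := by rw [NNReal.rpow_one]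
  calc ∑ x ∈ s, f x ^ q ≤ ∑ x ∈ s, f x * c ^ (q - 1) := Finset.sum_le_sum fun x _ => step x
    _ = (∑ x ∈ s, f x) * c ^ (q - 1) := by rw [← Finset.sum_mul]
    _ ≤ c * c ^ (q - 1) := by gcongr
    _ = c ^ (1 : ℝ) * c ^ (q - 1) := by rw [NNReal.rpow_one]
    _ = c ^ q := by rw [← NNReal.rpow_add' (by rw [h1]; exact hq0), h1]

/-- **Weighted four functions theorem** (weighted Ahlswede–Daykin inequality on `ℤⁿ`). -/
theorem weighted_four_functions {n : ℕ} (hn : 1 ≤ n) (α β γ δ : ℝ)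
    (hα : 0 < α) (hβ : 0 < β) (hγ : 0 < γ) (hδ : 0 < δ)
    (hmix : max α β ≤ min γ δ)
    (f g h k : (Fin n → ℤ) → ℝ≥0)
    (hyp : ∀ x y : Fin n → ℤ,
      f x ^ α * g y ^ β ≤
        h (fun i => min (x i) (y i)) ^ γ * k (fun i => max (x i) (y i)) ^ δ) :
    (∑' x, (f x : ℝ≥0∞)) ^ α * (∑' x, (g x : ℝ≥0∞)) ^ β ≤
      (∑' x, (h x : ℝ≥0∞)) ^ γ * (∑' x, (k x : ℝ≥0∞)) ^ δ := by
  classical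
  set p : ℝ := max α β with hp_def
  have hp : 0 < p := lt_max_of_lt_left hα
  have hαp : α ≤ p := le_max_left _ _
  have hβp : β ≤ p := le_max_right _ _
  have hpγ : p ≤ γ := hmix.trans (min_le_left _ _)
  have hpδ : p ≤ δ := hmix.trans (min_le_right _ _)
  -- Degenerate case: some of the four functions forces the LHS to vanish.
  by_cases hdeg : (∀ x, h x = 0) ∨ (∀ x, k x = 0)
  · -- then `f x ^ α * g y ^ β = 0` for all x, y
    have hzero : ∀ x y : Fin n → ℤ, f x ^ α * g y ^ β = 0 := by
      intro x y
      refine le_antisymm ?_ (zero_le)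
      refine (hyp x y).trans (le_of_eq ?_)
      rcases hdeg with hd | hd
      · rw [hd, NNReal.zero_rpow hγ.ne', zero_mul]
      · rw [hd, NNReal.zero_rpow hδ.ne', mul_zero]
    by_cases hf0 : ∀ x, f x = 0
    · have : (∑' x, (f x : ℝ≥0∞)) = 0 := by simp [hf0]
      rw [this, ENNReal.zero_rpow_of_pos hα, zero_mul]
      exact zero_le
    · push_neg at hf0
      obtain ⟨x0, hx0⟩ := hf0
      have hg0 : ∀ y, g y = 0 := by
        intro y
        have := hzero x0 y
        rcases mul_eq_zero.1 this with h' | h'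
        · exact absurd h' (by
            simp only [NNReal.rpow_eq_zero_iff]
            exact fun ⟨h1, _⟩ => hx0 h1)
        · have := NNReal.rpow_eq_zero_iff.1 h'
          exact this.1
      have : (∑' x, (g x : ℝ≥0∞)) = 0 := by simp [hg0]
      rw [this, ENNReal.zero_rpow_of_pos hβ, mul_zero]
      exact zero_le
  push_neg at hdeg
  obtain ⟨hh0, hk0⟩ := hdeg
  -- Case: one of the RHS sums is infinite.
  set C : ℝ≥0∞ := ∑' x, (h x : ℝ≥0∞) with hC_def
  set D : ℝ≥0∞ := ∑' x, (k x : ℝ≥0∞) with hD_def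
  have hCpos : C ≠ 0 := by
    obtain ⟨x, hx⟩ := hh0
    intro hC0
    rw [hC_def, ENNReal.tsum_eq_zero] at hC0
    exact hx (by simpa using hC0 x)
  have hDpos : D ≠ 0 := by
    obtain ⟨x, hx⟩ := hk0
    intro hD0
    rw [hD_def, ENNReal.tsum_eq_zero] at hD0
    exact hx (by simpa using hD0 x)
  by_cases hCtop : C = ⊤
  · rw [hCtop, ENNReal.top_rpow_of_pos hγ, ENNReal.top_mul]
    · exact le_top
    · simp only [ne_eq, ENNReal.rpow_eq_zero_iff, not_or]
      constructor
      · exact fun ⟨h1, _⟩ => hDpos h1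
      · rintro ⟨_, h2⟩; linarith
  by_cases hDtop : D = ⊤
  · rw [hDtop, ENNReal.top_rpow_of_pos hδ, ENNReal.mul_top]
    · exact le_top
    · simp only [ne_eq, ENNReal.rpow_eq_zero_iff, not_or]
      constructor
      · exact fun ⟨h1, _⟩ => hCpos h1
      · rintro ⟨_, h2⟩; linarith
  -- Now C, D are finite and positive.
  set c : ℝ≥0 := C.toNNReal with hc_def
  set d : ℝ≥0 := D.toNNReal with hd_def
  have hCc : C = (c : ℝ≥0∞) := (ENNReal.coe_toNNReal hCtop).symm
  have hDd : D = (d : ℝ≥0∞) := (ENNReal.coe_toNNReal hDtop).symm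
  have hhc : ∀ x, h x ≤ c := by
    intro x
    have : (h x : ℝ≥0∞) ≤ C := ENNReal.le_tsum x
    rw [hCc] at this
    exact_mod_cast this
  have hkd : ∀ x, k x ≤ d := by
    intro x
    have : (k x : ℝ≥0∞) ≤ D := ENNReal.le_tsum x
    rw [hDd] at this
    exact_mod_cast this
  have hhsum : ∀ s : Finset (Fin n → ℤ), ∑ x ∈ s, h x ≤ c := by
    intro s
    have : (↑(∑ x ∈ s, h x) : ℝ≥0∞) ≤ C := by
      rw [ENNReal.coe_finset_sum]; exact ENNReal.sum_le_tsum s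
    rw [hCc] at this; exact_mod_cast this
  have hksum : ∀ s : Finset (Fin n → ℤ), ∑ x ∈ s, k x ≤ d := by
    intro s
    have : (↑(∑ x ∈ s, k x) : ℝ≥0∞) ≤ D := by
      rw [ENNReal.coe_finset_sum]; exact ENNReal.sum_le_tsum s
    rw [hDd] at this; exact_mod_cast this
  -- The pointwise hypothesis in lattice form, raised to the power 1/p.
  have hcond : ∀ a b : Fin n → ℤ,
      f a ^ (α / p) * g b ^ (β / p) ≤ h (a ⊓ b) ^ (γ / p) * k (a ⊔ b) ^ (δ / p) := by
    intro a b
    have hinf : a ⊓ b = fun i => min (a i) (b i) := rfl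
    have hsup : a ⊔ b = fun i => max (a i) (b i) := rfl
    have := NNReal.rpow_le_rpow (hyp a b) (le_of_lt (one_div_pos.2 hp))
    rw [NNReal.mul_rpow, NNReal.mul_rpow, ← NNReal.rpow_mul, ← NNReal.rpow_mul,
      ← NNReal.rpow_mul, ← NNReal.rpow_mul] at this
    simp only [mul_one_div] at this
    rw [hinf, hsup]
    exact this
  -- Key finite inequality.
  have key : ∀ s t : Finset (Fin n → ℤ),
      (∑ x ∈ s, f x) ^ α * (∑ x ∈ t, g x) ^ β ≤ c ^ γ * d ^ δ := by
    intro s t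
    have main := four_functions_theorem (fun x => f x ^ (α / p)) (fun x => g x ^ (β / p))
      (fun x => h x ^ (γ / p)) (fun x => k x ^ (δ / p))
      (fun _ => zero_le) (fun _ => zero_le) (fun _ => zero_le) (fun _ => zero_le)
      hcond s t
    have hf_sub : (∑ x ∈ s, f x) ^ (α / p) ≤ ∑ x ∈ s, f x ^ (α / p) :=
      wff_sum_rpow_le s f (div_pos hα hp) (div_le_one_of_le₀ hαp hp.le)
    have hg_sub : (∑ x ∈ t, g x) ^ (β / p) ≤ ∑ x ∈ t, g x ^ (β / p) :=
      wff_sum_rpow_le t g (div_pos hβ hp) (div_le_one_of_le₀ hβp hp.le)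
    have hh_bd : ∑ x ∈ s ⊼ t, h x ^ (γ / p) ≤ c ^ (γ / p) :=
      wff_sum_rpow_ge_one_le _ h c ((one_le_div hp).2 hpγ) hhc (hhsum _)
    have hk_bd : ∑ x ∈ s ⊻ t, k x ^ (δ / p) ≤ d ^ (δ / p) :=
      wff_sum_rpow_ge_one_le _ k d ((one_le_div hp).2 hpδ) hkd (hksum _)
    have step : (∑ x ∈ s, f x) ^ (α / p) * (∑ x ∈ t, g x) ^ (β / p)
        ≤ c ^ (γ / p) * d ^ (δ / p) := by
      calc (∑ x ∈ s, f x) ^ (α / p) * (∑ x ∈ t, g x) ^ (β / p)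
          ≤ (∑ x ∈ s, f x ^ (α / p)) * ∑ x ∈ t, g x ^ (β / p) :=
            mul_le_mul' hf_sub hg_sub
        _ ≤ (∑ x ∈ s ⊼ t, h x ^ (γ / p)) * ∑ x ∈ s ⊻ t, k x ^ (δ / p) := main
        _ ≤ c ^ (γ / p) * d ^ (δ / p) := mul_le_mul' hh_bd hk_bd
    have := NNReal.rpow_le_rpow step hp.le
    rwa [NNReal.mul_rpow, NNReal.mul_rpow, ← NNReal.rpow_mul, ← NNReal.rpow_mul,
      ← NNReal.rpow_mul, ← NNReal.rpow_mul, div_mul_cancel₀ _ hp.ne',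
      div_mul_cancel₀ _ hp.ne', div_mul_cancel₀ _ hp.ne', div_mul_cancel₀ _ hp.ne'] at this
  -- Pass to the limit using `tsum = iSup` of finite sums.
  have hA : (∑' x, (f x : ℝ≥0∞)) = ⨆ s : Finset (Fin n → ℤ), ↑(∑ x ∈ s, f x) := by
    rw [ENNReal.tsum_eq_iSup_sum]
    exact iSup_congr fun s => (ENNReal.coe_finset_sum s f).symm
  have hB : (∑' x, (g x : ℝ≥0∞)) = ⨆ s : Finset (Fin n → ℤ), ↑(∑ x ∈ s, g x) := by
    rw [ENNReal.tsum_eq_iSup_sum]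
    exact iSup_congr fun s => (ENNReal.coe_finset_sum s g).symm
  have hiSup_rpow : ∀ (F : Finset (Fin n → ℤ) → ℝ≥0∞) (q : ℝ) (hq : 0 < q),
      (⨆ s, F s) ^ q = ⨆ s, (F s) ^ q := by
    intro F q hq
    have h' := map_iSup (ENNReal.orderIsoRpow q hq) F
    simp only [ENNReal.orderIsoRpow_apply] at h'
    exact h'
  rw [hA, hB, hiSup_rpow _ α hα, hiSup_rpow _ β hβ, ENNReal.iSup_mul]
  refine iSup_le fun s => ?_
  rw [ENNReal.mul_iSup]
  refine iSup_le fun t => ?_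
  have := key s t
  have hcast : (↑((∑ x ∈ s, f x) ^ α * (∑ x ∈ t, g x) ^ β) : ℝ≥0∞)
      ≤ (↑(c ^ γ * d ^ δ) : ℝ≥0∞) := ENNReal.coe_le_coe.2 this
  rw [ENNReal.coe_mul, ENNReal.coe_mul, ENNReal.coe_rpow_of_nonneg _ hα.le,
    ENNReal.coe_rpow_of_nonneg _ hβ.le, ENNReal.coe_rpow_of_nonneg _ hγ.le,
    ENNReal.coe_rpow_of_nonneg _ hδ.le] at hcast
  calc (↑(∑ x ∈ s, f x) : ℝ≥0∞) ^ α * (↑(∑ x ∈ t, g x) : ℝ≥0∞) ^ β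
      ≤ (c : ℝ≥0∞) ^ γ * (d : ℝ≥0∞) ^ δ := hcast
    _ = C ^ γ * D ^ δ := by rw [hCc, hDd]
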